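/- For any permutation σ of {1,…,r} and any modes K_{ν₁},…,K_{ν_r} from a lowest weight representation {Lₙ, Wₙ} of the W₃-algebra with lowest weight vector Ψ, the difference K_{ν₁}⋯K_{ν_r}Ψ - K_{ν_{σ(1)}}⋯K_{ν_{σ(r)}}Ψ is a linear combination of vectors K_{ν'₁}⋯K_{ν'_s}Ψ with strictly smaller total grade g, where g assigns weight 2 to each L mode and weight 3 to each W mode. -/

import Mathlib

/-- In a lowest weight representation {Lₙ, Wₙ} of the W₃-algebra with lowest weight
vector Ψ, for any permutation of a product of modes applied to Ψ, the difference
K_{ν₁}⋯K_{ν_r}Ψ - K_{ν_{σ(1)}}⋯K_{ν_{σ(r)}}Ψ lies in the span of vectors K_{ν'₁}⋯K_{ν'_s}Ψ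
of strictly smaller total grade g (with g(L) = 2, g(W) = 3).  A pair (true, n) encodes Lₙ
and (false, n) encodes Wₙ. -/
theorem stmt_16 {V : Type*} [AddCommGroup V] [Module ℂ V]
    (c h w b : ℂ) (hc : c ≠ -22 / 5) (hb : b ^ 2 = 16 / (22 + 5 * c))
    (L W Λ : ℤ → V →ₗ[ℂ] V)
    (hfield : ∀ v : V, ∃ N : ℤ, ∀ n : ℤ, N ≤ n → L n v = 0 ∧ W n v = 0)
    (hΛ : ∀ (n : ℤ) (v : V), ∃ N : ℕ, ∀ M : ℕ, N ≤ M →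
      Λ n v = (∑ k ∈ Finset.Icc (-1 : ℤ) (M : ℤ), L (n - k) (L k v))
        + (∑ k ∈ Finset.Icc (-(M : ℤ)) (-2 : ℤ), L k (L (n - k) v))
        - ((3 / 10 : ℂ) * ((n : ℂ) + 2) * ((n : ℂ) + 3)) • L n v)
    (hLL : ∀ m n : ℤ, L m ∘ₗ L n - L n ∘ₗ L m
      = ((m : ℂ) - (n : ℂ)) • L (m + n)
        + (if m + n = 0 then c / 12 * (m : ℂ) * ((m : ℂ) ^ 2 - 1) else 0) • LinearMap.id)
    (hLW : ∀ m n : ℤ, L m ∘ₗ W n - W n ∘ₗ L m = (2 * (m : ℂ) - (n : ℂ)) • W (m + n))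
    (hWW : ∀ m n : ℤ, W m ∘ₗ W n - W n ∘ₗ W m
      = (if m + n = 0 then
          c / 360 * ((m : ℂ) ^ 2 - 4) * ((m : ℂ) ^ 2 - 1) * (m : ℂ) else 0) • LinearMap.id
        + (b ^ 2 * ((m : ℂ) - (n : ℂ))) • Λ (m + n)
        + ((1 / 20 : ℂ) * ((m : ℂ) - (n : ℂ))
            * (2 * (m : ℂ) ^ 2 - (m : ℂ) * (n : ℂ) + 2 * (n : ℂ) ^ 2 - 8)) • L (m + n))
    (Ψ : V)
    (hpos : ∀ n : ℤ, 0 < n → L n Ψ = 0 ∧ W n Ψ = 0)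
    (hL0 : L 0 Ψ = h • Ψ) (hW0 : W 0 Ψ = w • Ψ)
    (f : Bool × ℤ → V → V) (hf : ∀ p x, f p x = (if p.1 then L p.2 else W p.2) x)
    (gdeg : List (Bool × ℤ) → ℕ)
    (hg : ∀ l : List (Bool × ℤ), gdeg l = (l.map (fun p => if p.1 then 2 else 3)).sum) :
    ∀ l l' : List (Bool × ℤ), l.Perm l' →
      (l.foldr f Ψ) - (l'.foldr f Ψ) ∈ Submodule.span ℂ
        {v : V | ∃ l'' : List (Bool × ℤ), gdeg l'' < gdeg l ∧ v = l''.foldr f Ψ} := by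
  classical
  set Sp : ℕ → Submodule ℂ V := fun g => Submodule.span ℂ
    {v : V | ∃ l'' : List (Bool × ℤ), gdeg l'' < g ∧ v = l''.foldr f Ψ} with hSp
  have hgen : ∀ (t : List (Bool × ℤ)) (g : ℕ), gdeg t < g → t.foldr f Ψ ∈ Sp g :=
    fun t g hlt => Submodule.subset_span ⟨t, hlt, rfl⟩
  have hgd : ∀ (p : Bool × ℤ) (t : List (Bool × ℤ)),
      gdeg (p :: t) = (if p.1 then 2 else 3) + gdeg t := by
    intro p t; rw [hg, hg]; simp
  have hgp : ∀ l l' : List (Bool × ℤ), l.Perm l' → gdeg l = gdeg l' := by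
    intro l l' hp; rw [hg, hg]; exact List.Perm.sum_eq (hp.map _)
  have hfL : ∀ (n : ℤ) (x : V), f (true, n) x = L n x := by intro n x; rw [hf]; simp
  have hfW : ∀ (n : ℤ) (x : V), f (false, n) x = W n x := by intro n x; rw [hf]; simp
  have hmap : ∀ (p : Bool × ℤ) (g : ℕ) (x : V), x ∈ Sp g →
      (if p.1 then L p.2 else W p.2 : V →ₗ[ℂ] V) x ∈ Sp ((if p.1 then 2 else 3) + g) := by
    intro p g x hx
    have hle : Sp g ≤ Submodule.comap (if p.1 then L p.2 else W p.2 : V →ₗ[ℂ] V)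
        (Sp ((if p.1 then 2 else 3) + g)) := by
      apply Submodule.span_le.mpr
      rintro v ⟨t, hlt, rfl⟩
      simp only [Set.mem_setOf_eq, SetLike.mem_coe, Submodule.mem_comap]
      have key : (if p.1 then L p.2 else W p.2 : V →ₗ[ℂ] V) (t.foldr f Ψ)
          = (p :: t).foldr f Ψ := by rw [List.foldr_cons, hf]
      rw [key]
      exact hgen _ _ (by rw [hgd]; omega)
    exact hle hx
  have hswap : ∀ (a b : Bool × ℤ) (t : List (Bool × ℤ)),
      (a :: b :: t).foldr f Ψ - (b :: a :: t).foldr f Ψ ∈ Sp (gdeg (a :: b :: t)) := by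
    rintro ⟨ba, m⟩ ⟨bb, n⟩ t
    have memv : ∀ g : ℕ, gdeg t < g → t.foldr f Ψ ∈ Sp g := hgen t
    have memL : ∀ (k : ℤ) (g : ℕ), gdeg t + 2 < g → L k (t.foldr f Ψ) ∈ Sp g := by
      intro k g hlt
      have key : L k (t.foldr f Ψ) = ((true, k) :: t).foldr f Ψ := by
        rw [List.foldr_cons, hfL]
      rw [key]; exact hgen _ _ (by rw [hgd]; simp; omega)
    have memW : ∀ (k : ℤ) (g : ℕ), gdeg t + 3 < g → W k (t.foldr f Ψ) ∈ Sp g := by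
      intro k g hlt
      have key : W k (t.foldr f Ψ) = ((false, k) :: t).foldr f Ψ := by
        rw [List.foldr_cons, hfW]
      rw [key]; exact hgen _ _ (by rw [hgd]; simp; omega)
    have memLL : ∀ (j k : ℤ) (g : ℕ), gdeg t + 4 < g →
        L j (L k (t.foldr f Ψ)) ∈ Sp g := by
      intro j k g hlt
      have key : L j (L k (t.foldr f Ψ)) = ((true, j) :: (true, k) :: t).foldr f Ψ := by
        rw [List.foldr_cons, List.foldr_cons, hfL, hfL]
      rw [key]; exact hgen _ _ (by rw [hgd, hgd]; simp; omega)
    have memΛ : ∀ (k : ℤ) (g : ℕ), gdeg t + 4 < g → Λ k (t.foldr f Ψ) ∈ Sp g := by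
      intro k g hlt
      obtain ⟨N, hN⟩ := hΛ k (t.foldr f Ψ)
      rw [hN N le_rfl]
      exact sub_mem
        (add_mem (Submodule.sum_mem _ fun i _ => memLL _ _ _ hlt)
          (Submodule.sum_mem _ fun i _ => memLL _ _ _ hlt))
        (Submodule.smul_mem _ _ (memL _ _ (by omega)))
    cases ba <;> cases bb
    · -- W W
      have hG : gdeg ((false, m) :: (false, n) :: t) = gdeg t + 6 := by
        rw [hgd, hgd]; simp; omega
      rw [hG]
      simp only [List.foldr_cons, hfW]
      have hcomm := congrArg (fun T : V →ₗ[ℂ] V => T (t.foldr f Ψ)) (hWW m n)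
      simp only [LinearMap.sub_apply, LinearMap.comp_apply, LinearMap.add_apply,
        LinearMap.smul_apply, LinearMap.id_apply] at hcomm
      rw [hcomm]
      exact add_mem (add_mem (Submodule.smul_mem _ _ (memv _ (by omega)))
        (Submodule.smul_mem _ _ (memΛ _ _ (by omega))))
        (Submodule.smul_mem _ _ (memL _ _ (by omega)))
    · -- W L
      have hG : gdeg ((false, m) :: (true, n) :: t) = gdeg t + 5 := by
        rw [hgd, hgd]; simp; omega
      rw [hG]
      simp only [List.foldr_cons, hfW, hfL]
      have hcomm := congrArg (fun T : V →ₗ[ℂ] V => T (t.foldr f Ψ)) (hLW n m)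
      simp only [LinearMap.sub_apply, LinearMap.comp_apply, LinearMap.smul_apply] at hcomm
      rw [← neg_sub, hcomm]
      exact neg_mem (Submodule.smul_mem _ _ (memW _ _ (by omega)))
    · -- L W
      have hG : gdeg ((true, m) :: (false, n) :: t) = gdeg t + 5 := by
        rw [hgd, hgd]; simp; omega
      rw [hG]
      simp only [List.foldr_cons, hfW, hfL]
      have hcomm := congrArg (fun T : V →ₗ[ℂ] V => T (t.foldr f Ψ)) (hLW m n)
      simp only [LinearMap.sub_apply, LinearMap.comp_apply, LinearMap.smul_apply] at hcomm
      rw [hcomm]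
      exact Submodule.smul_mem _ _ (memW _ _ (by omega))
    · -- L L
      have hG : gdeg ((true, m) :: (true, n) :: t) = gdeg t + 4 := by
        rw [hgd, hgd]; simp; omega
      rw [hG]
      simp only [List.foldr_cons, hfL]
      have hcomm := congrArg (fun T : V →ₗ[ℂ] V => T (t.foldr f Ψ)) (hLL m n)
      simp only [LinearMap.sub_apply, LinearMap.comp_apply, LinearMap.add_apply,
        LinearMap.smul_apply, LinearMap.id_apply] at hcomm
      rw [hcomm]
      exact add_mem (Submodule.smul_mem _ _ (memL _ _ (by omega)))
        (Submodule.smul_mem _ _ (memv _ (by omega)))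
  have main : ∀ l l' : List (Bool × ℤ), l.Perm l' →
      l.foldr f Ψ - l'.foldr f Ψ ∈ Sp (gdeg l) := by
    intro l l' hperm
    induction hperm with
    | nil => simpa using Submodule.zero_mem _
    | cons p hp ih =>
      rename_i l₁ l₂
      simp only [List.foldr_cons]
      have h1 : f p (l₁.foldr f Ψ) - f p (l₂.foldr f Ψ)
          = (if p.1 then L p.2 else W p.2 : V →ₗ[ℂ] V) (l₁.foldr f Ψ - l₂.foldr f Ψ) := by
        rw [map_sub, hf, hf]
      rw [h1, hgd]
      exact hmap p _ _ ih
    | swap x y l => exact hswap y x l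
    | trans h1 h2 ih1 ih2 =>
      rename_i l₁ l₂ l₃
      have e : gdeg l₁ = gdeg l₂ := hgp _ _ h1
      have hd : l₁.foldr f Ψ - l₃.foldr f Ψ
          = (l₁.foldr f Ψ - l₂.foldr f Ψ) + (l₂.foldr f Ψ - l₃.foldr f Ψ) := by abel
      rw [hd]
      exact add_mem ih1 (e ▸ ih2)
  intro l l' hperm
  exact main l l' hperm
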